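/- Let Σ = {A, B} be a pair of 2×2 real matrices that share at least one common eigenvector, i.e., there exists a nonzero vector q ∈ ℝ² and real numbers λ, μ with A·q = λ·q and B·q = μ·q. Then for every a ∈ ℝ² and every integer k ≥ 1, N_k(Σ, a) ≤ 2k. -/
import Mathlib


open Matrix Set

noncomputable section

/-- `XSeq S a k` is the set of all vectors `T_{k-1} ⋯ T_0 · a` with each `T_j ∈ S`
(and `XSeq S a 0 = {a}`). -/
def XSeq {n : ℕ} (S : Set (Matrix (Fin n) (Fin n) ℝ)) (a : Fin n → ℝ) : ℕ → Set (Fin n → ℝ)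
  | 0 => {a}
  | k + 1 => ⋃ A ∈ S, A.mulVec '' XSeq S a k

/-- `PHull S a k` is the convex hull of `XSeq S a k`. -/
def PHull {n : ℕ} (S : Set (Matrix (Fin n) (Fin n) ℝ)) (a : Fin n → ℝ) (k : ℕ) :
    Set (Fin n → ℝ) :=
  convexHull ℝ (XSeq S a k)

/-- `EPts S a k` is the set of extreme points of `PHull S a k`. -/
def EPts {n : ℕ} (S : Set (Matrix (Fin n) (Fin n) ℝ)) (a : Fin n → ℝ) (k : ℕ) :
    Set (Fin n → ℝ) :=
  Set.extremePoints ℝ (PHull S a k)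

/-- `NExt S a k` is the number of extreme points of `PHull S a k`. -/
def NExt {n : ℕ} (S : Set (Matrix (Fin n) (Fin n) ℝ)) (a : Fin n → ℝ) (k : ℕ) : ℕ :=
  (EPts S a k).ncard

namespace Stmt4Aux

/-- the functional vanishing on `q` -/
def fq (q : Fin 2 → ℝ) (x : Fin 2 → ℝ) : ℝ := q 1 * x 0 - q 0 * x 1

/-- a functional injective together with `fq` -/
def gq (q : Fin 2 → ℝ) (x : Fin 2 → ℝ) : ℝ := q 0 * x 0 + q 1 * x 1

lemma q_cases {q : Fin 2 → ℝ} (hq : q ≠ 0) : q 0 ≠ 0 ∨ q 1 ≠ 0 := by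
  by_contra h
  push_neg at h
  apply hq
  funext i
  fin_cases i <;> simp [h.1, h.2]

lemma fq_inj {q : Fin 2 → ℝ} (hq : q ≠ 0) {x y : Fin 2 → ℝ}
    (h1 : fq q x = fq q y) (h2 : gq q x = gq q y) : x = y := by
  have hs : q 0 ^ 2 + q 1 ^ 2 ≠ 0 := by
    rcases q_cases hq with h | h
    · have := mul_self_pos.mpr h
      nlinarith [sq_nonneg (q 1)]
    · have := mul_self_pos.mpr h
      nlinarith [sq_nonneg (q 0)]
  simp only [fq, gq] at h1 h2
  funext i
  fin_cases i
  · show x 0 = y 0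
    have e : (q 0 ^ 2 + q 1 ^ 2) * x 0 = (q 0 ^ 2 + q 1 ^ 2) * y 0 := by
      linear_combination q 0 * h2 + q 1 * h1
    exact mul_left_cancel₀ hs e
  · show x 1 = y 1
    have e : (q 0 ^ 2 + q 1 ^ 2) * x 1 = (q 0 ^ 2 + q 1 ^ 2) * y 1 := by
      linear_combination q 1 * h2 - q 0 * h1
    exact mul_left_cancel₀ hs e

lemma exists_scale {q : Fin 2 → ℝ} (hq : q ≠ 0) (A : Matrix (Fin 2) (Fin 2) ℝ) (lam : ℝ)
    (hA : A.mulVec q = lam • q) : ∃ α : ℝ, ∀ x, fq q (A.mulVec x) = α * fq q x := by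
  have e0 := congrFun hA 0
  have e1 := congrFun hA 1
  simp [Matrix.mulVec, dotProduct, Fin.sum_univ_two] at e0 e1
  rcases q_cases hq with h | h
  · refine ⟨(q 0 * A 1 1 - q 1 * A 0 1) / q 0, fun x => ?_⟩
    rw [div_mul_eq_mul_div, eq_div_iff h]
    unfold fq
    simp only [Matrix.mulVec, dotProduct, Fin.sum_univ_two]
    linear_combination x 0 * q 1 * e0 - x 0 * q 0 * e1
  · refine ⟨(q 1 * A 0 0 - q 0 * A 1 0) / q 1, fun x => ?_⟩
    rw [div_mul_eq_mul_div, eq_div_iff h]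
    unfold fq
    simp only [Matrix.mulVec, dotProduct, Fin.sum_univ_two]
    linear_combination x 1 * q 1 * e0 - x 1 * q 0 * e1

lemma fq_combo (q : Fin 2 → ℝ) (s t : ℝ) (u w : Fin 2 → ℝ) :
    fq q (s • u + t • w) = s * fq q u + t * fq q w := by
  unfold fq
  simp [Pi.add_apply, Pi.smul_apply, smul_eq_mul]
  ring

lemma gq_combo (q : Fin 2 → ℝ) (s t : ℝ) (u w : Fin 2 → ℝ) :
    gq q (s • u + t • w) = s * gq q u + t * gq q w := by
  unfold gq
  simp [Pi.add_apply, Pi.smul_apply, smul_eq_mul]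
  ring

/-- A point of a convex set strictly between (in `gq`-value) two other points of the set,
all on the same `fq`-level, is not extreme. -/
lemma middle {q : Fin 2 → ℝ} (hq : q ≠ 0) (P : Set (Fin 2 → ℝ)) {u v w : Fin 2 → ℝ}
    (hu : u ∈ P) (hw : w ∈ P) (hv : v ∈ Set.extremePoints ℝ P)
    (hfu : fq q u = fq q v) (hfw : fq q w = fq q v)
    (h1 : gq q u < gq q v) (h2 : gq q v < gq q w) : False := by
  have hd : gq q w - gq q u > 0 := by linarith
  set s : ℝ := (gq q w - gq q v) / (gq q w - gq q u) with hs
  have hs0 : 0 < s := div_pos (by linarith) hd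
  have hs1 : s < 1 := (div_lt_one hd).mpr (by linarith)
  have hc : v = s • u + (1 - s) • w := by
    apply fq_inj hq
    · rw [fq_combo, hfu, hfw]; ring
    · have hne : gq q w - gq q u ≠ 0 := ne_of_gt hd
      rw [gq_combo, hs]
      field_simp
      ring
  have hseg : v ∈ openSegment ℝ u w := ⟨s, 1 - s, hs0, by linarith, by ring, hc.symm⟩
  obtain ⟨he, _⟩ := (mem_extremePoints.mp hv).2 u hu w hw hseg
  rw [he] at h1
  exact lt_irrefl _ h1

/-- At most two extreme points on any `fq`-level. -/
lemma no_three {q : Fin 2 → ℝ} (hq : q ≠ 0) (P : Set (Fin 2 → ℝ)) {u v w : Fin 2 → ℝ}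
    (hu : u ∈ Set.extremePoints ℝ P) (hv : v ∈ Set.extremePoints ℝ P)
    (hw : w ∈ Set.extremePoints ℝ P)
    (hfu : fq q u = fq q v) (hfw : fq q w = fq q v)
    (huv : u ≠ v) (huw : u ≠ w) (hvw : v ≠ w) : False := by
  have hu' : u ∈ P := extremePoints_subset hu
  have hv' : v ∈ P := extremePoints_subset hv
  have hw' : w ∈ P := extremePoints_subset hw
  have d1 : gq q u ≠ gq q v := fun h => huv (fq_inj hq hfu h)
  have d2 : gq q u ≠ gq q w := fun h => huw (fq_inj hq (by rw [hfu, hfw]) h)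
  have d3 : gq q v ≠ gq q w := fun h => hvw (fq_inj hq hfw.symm h)
  rcases d1.lt_or_gt with h1 | h1
  · rcases d2.lt_or_gt with h2 | h2
    · rcases d3.lt_or_gt with h3 | h3
      · exact middle hq P hu' hw' hv hfu hfw h1 h3
      · exact middle hq P hu' hv' hw (by rw [hfu, hfw]) hfw.symm h2 h3
    · exact middle hq P hw' hv' hu (by rw [hfw, ← hfu]) hfu.symm h2 h1
  · rcases d2.lt_or_gt with h2 | h2
    · exact middle hq P hv' hw' hu hfu.symm (by rw [hfw, ← hfu]) h1 h2
    · rcases d3.lt_or_gt with h3 | h3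
      · exact middle hq P hv' hu' hw hfw.symm (by rw [hfu, ← hfw]) h3 h2
      · exact middle hq P hw' hu' hv hfw hfu h3 h1

/-- iterates of a single matrix -/
def iterVec (M : Matrix (Fin 2) (Fin 2) ℝ) (a : Fin 2 → ℝ) : ℕ → Fin 2 → ℝ
  | 0 => a
  | k + 1 => M.mulVec (iterVec M a k)

lemma XSeq_succ {n : ℕ} (S : Set (Matrix (Fin n) (Fin n) ℝ)) (a : Fin n → ℝ) (k : ℕ) :
    XSeq S a (k + 1) = ⋃ A ∈ S, A.mulVec '' XSeq S a k := rfl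

lemma XSeq_pair_finite (A B : Matrix (Fin 2) (Fin 2) ℝ) (a : Fin 2 → ℝ) (k : ℕ) :
    (XSeq {A, B} a k).Finite := by
  induction k with
  | zero => exact Set.finite_singleton a
  | succ k ih =>
      rw [XSeq_succ, Set.biUnion_pair]
      exact (ih.image _).union (ih.image _)

lemma witness (A B : Matrix (Fin 2) (Fin 2) ℝ) (a : Fin 2 → ℝ) {q : Fin 2 → ℝ} {α β : ℝ}
    (hα : ∀ x, fq q (A.mulVec x) = α * fq q x) (hβ : ∀ x, fq q (B.mulVec x) = β * fq q x) :
    ∀ k : ℕ, ∀ x ∈ XSeq {A, B} a k, ∃ j ≤ k,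
      fq q x = α ^ j * β ^ (k - j) * fq q a ∧
      (j = k → x = iterVec A a k) ∧ (j = 0 → x = iterVec B a k) := by
  intro k
  induction k with
  | zero =>
      intro x hx
      rw [show XSeq {A, B} a 0 = {a} from rfl, Set.mem_singleton_iff] at hx
      exact ⟨0, le_refl 0, by simp [hx], fun _ => hx, fun _ => hx⟩
  | succ k ih =>
      intro x hx
      rw [XSeq_succ, Set.biUnion_pair] at hx
      rcases hx with hx | hx
      · obtain ⟨y, hy, rfl⟩ := hx
        obtain ⟨j, hj, hf, hik, hi0⟩ := ih y hy
        refine ⟨j + 1, by omega, ?_, ?_, ?_⟩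
        · rw [hα, hf, show k + 1 - (j + 1) = k - j by omega, pow_succ]
          ring
        · intro h
          have : j = k := by omega
          rw [show iterVec A a (k + 1) = A.mulVec (iterVec A a k) from rfl, hik this]
        · intro h; omega
      · obtain ⟨y, hy, rfl⟩ := hx
        obtain ⟨j, hj, hf, hik, hi0⟩ := ih y hy
        refine ⟨j, by omega, ?_, ?_, ?_⟩
        · rw [hβ, hf, show k + 1 - j = (k - j) + 1 by omega, pow_succ]
          ring
        · intro h; omega
        · intro h
          rw [show iterVec B a (k + 1) = B.mulVec (iterVec B a k) from rfl, hi0 h]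

end Stmt4Aux

open Stmt4Aux in
/-- A pair of 2×2 matrices sharing a common eigenvector satisfies `N_k(Σ, a) ≤ 2k`
for all `k ≥ 1`. -/
theorem stmt4 (A B : Matrix (Fin 2) (Fin 2) ℝ)
    (hq : ∃ q : Fin 2 → ℝ, q ≠ 0 ∧ ∃ lam mu : ℝ,
      A.mulVec q = lam • q ∧ B.mulVec q = mu • q)
    (a : Fin 2 → ℝ) (k : ℕ) (hk : 1 ≤ k) :
    NExt {A, B} a k ≤ 2 * k := by
  classical
  obtain ⟨q, hq0, lam, mu, hAq, hBq⟩ := hq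
  obtain ⟨α, hα⟩ := exists_scale hq0 A lam hAq
  obtain ⟨β, hβ⟩ := exists_scale hq0 B mu hBq
  have hEsub : EPts {A, B} a k ⊆ XSeq {A, B} a k := extremePoints_convexHull_subset
  have hEfin : (EPts {A, B} a k).Finite := (XSeq_pair_finite A B a k).subset hEsub
  set E' : Finset (Fin 2 → ℝ) := hEfin.toFinset with hE'
  have hcard : NExt {A, B} a k = E'.card := by
    rw [NExt, hE', Set.ncard_eq_toFinset_card _ hEfin]
  set t : ℕ → ℝ := fun j => α ^ j * β ^ (k - j) * fq q a with ht
  set F : Finset (Fin 2 → ℝ) :=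
    ({iterVec A a k, iterVec B a k} : Finset (Fin 2 → ℝ)) ∪
      (Finset.Ioo 0 k).biUnion (fun j => E'.filter (fun x => fq q x = t j)) with hF
  have hsub : E' ⊆ F := by
    intro x hx
    have hxE : x ∈ EPts {A, B} a k := by
      rw [hE'] at hx; exact hEfin.mem_toFinset.mp hx
    have hxX : x ∈ XSeq {A, B} a k := hEsub hxE
    obtain ⟨j, hj, hf, hik, hi0⟩ := witness A B a hα hβ k x hxX
    by_cases hjk : j = k
    · rw [hF]
      apply Finset.mem_union_left
      simp [hik hjk]
    · by_cases hj0 : j = 0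
      · rw [hF]
        apply Finset.mem_union_left
        simp [hi0 hj0]
      · rw [hF]
        apply Finset.mem_union_right
        refine Finset.mem_biUnion.mpr ⟨j, Finset.mem_Ioo.mpr ⟨by omega, by omega⟩, ?_⟩
        exact Finset.mem_filter.mpr ⟨hx, hf⟩
  have hlevel : ∀ j, (E'.filter (fun x => fq q x = t j)).card ≤ 2 := by
    intro j
    by_contra h
    push_neg at h
    obtain ⟨u, hu, v, hv, w, hw, huv, huw, hvw⟩ := Finset.two_lt_card.mp h
    simp only [Finset.mem_filter] at hu hv hw
    have hmem : ∀ y ∈ E', y ∈ Set.extremePoints ℝ (PHull {A, B} a k) := by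
      intro y hy
      rw [hE'] at hy
      exact hEfin.mem_toFinset.mp hy
    exact no_three hq0 (PHull {A, B} a k) (hmem u hu.1) (hmem v hv.1) (hmem w hw.1)
      (by rw [hu.2, hv.2]) (by rw [hw.2, hv.2]) huv huw hvw
  have hFcard : F.card ≤ 2 + 2 * (k - 1) := by
    rw [hF]
    calc _ ≤ ({iterVec A a k, iterVec B a k} : Finset (Fin 2 → ℝ)).card +
        ((Finset.Ioo 0 k).biUnion (fun j => E'.filter (fun x => fq q x = t j))).card :=
          Finset.card_union_le _ _
    _ ≤ 2 + 2 * (k - 1) := by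
        gcongr
        · exact le_trans (Finset.card_insert_le _ _) (by simp)
        · calc _ ≤ ∑ j ∈ Finset.Ioo 0 k, (E'.filter (fun x => fq q x = t j)).card :=
                Finset.card_biUnion_le
          _ ≤ ∑ _j ∈ Finset.Ioo 0 k, 2 := Finset.sum_le_sum (fun j _ => hlevel j)
          _ = 2 * (k - 1) := by
              rw [Finset.sum_const, Nat.card_Ioo]
              simp [mul_comm]
  calc NExt {A, B} a k = E'.card := hcard
  _ ≤ F.card := Finset.card_le_card hsub
  _ ≤ 2 + 2 * (k - 1) := hFcard
  _ ≤ 2 * k := by omega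

end
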